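/- arXiv:1402.1826 — 6 statements merged into one kernel-verified Lean document; each statement's English description precedes it below -/
import Mathlib

section
/- Let n ≥ 7 be an odd integer with d = φ(n) and suppose 2d ≥ n + 5. Let α be the action of ℤ_n = ⟨C_n⟩ on ℤ^d given by the companion matrix C_n of the n-th cyclotomic polynomial. Then there exists an odd l with 0 < l < d and a nonzero element of the l-th exterior power Λ^l ℤ^d that is fixed by Λ^l(C_n); equivalently, ∑_{l≥0} rank_ℤ((Λ^{2l+1}ℤ^d)^{ℤ_n}) > 0. -/
/-- The companion matrix of a polynomial `p` viewed as a `d × d` matrix: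
`1`'s on the subdiagonal, last column `(-a_0, …, -a_{d-1})ᵗ`, zeros elsewhere. -/
def companionMatrix (d : ℕ) (p : Polynomial ℤ) : Matrix (Fin d) (Fin d) ℤ :=
  Matrix.of fun i j =>
    if (j : ℕ) = d - 1 then -p.coeff (i : ℕ)
    else if (i : ℕ) = (j : ℕ) + 1 then 1 else 0

/-- The companion matrix of the `n`-th cyclotomic polynomial,
a `φ(n) × φ(n)` integer matrix. -/
noncomputable def cyclotomicCompanion (n : ℕ) :
    Matrix (Fin (Nat.totient n)) (Fin (Nat.totient n)) ℤ :=
  companionMatrix (Nat.totient n) (Polynomial.cyclotomic n ℤ)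

namespace Stmt4

open Polynomial Finset

noncomputable def phiMap (d : ℕ) (a : Fin 3 → ℕ) (ζ : ℂ) : (Fin d → ℤ) →ₗ[ℤ] (Fin 3 → ℂ) where
  toFun y := fun t => ∑ j : Fin d, (y j : ℂ) * ζ ^ (a t * (j : ℕ))
  map_add' y z := by
    funext t
    simp [add_mul, Finset.sum_add_distrib]
  map_smul' c y := by
    funext t
    simp [Finset.mul_sum, mul_assoc]

variable {n : ℕ}

lemma phi_apply (d : ℕ) (a : Fin 3 → ℕ) (ζ : ℂ) (y : Fin d → ℤ) (t : Fin 3) :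
    phiMap d a ζ y t = ∑ j : Fin d, (y j : ℂ) * ζ ^ (a t * (j : ℕ)) := rfl

lemma phi_single (d : ℕ) (a : Fin 3 → ℕ) (ζ : ℂ) (j : Fin d) (t : Fin 3) :
    phiMap d a ζ (Pi.single j 1) t = ζ ^ (a t * (j : ℕ)) := by
  rw [phi_apply, Finset.sum_eq_single j]
  · simp
  · intro j' _ hj'
    rw [Pi.single_eq_of_ne hj']
    simp
  · intro h
    exact absurd (Finset.mem_univ j) h

lemma phi_eigen (hn : 7 ≤ n) (a : Fin 3 → ℕ) (ζ : ℂ) (hζ : IsPrimitiveRoot ζ n)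
    (hcop : ∀ t, Nat.Coprime (a t) n) (y : Fin n.totient → ℤ) (t : Fin 3) :
    phiMap n.totient a ζ (Matrix.toLin' (cyclotomicCompanion n) y) t
      = ζ ^ (a t) * phiMap n.totient a ζ y t := by
  have hcol : ∀ i : Fin n.totient,
      (∑ j : Fin n.totient, ((cyclotomicCompanion n j i : ℤ) : ℂ) * ζ ^ (a t * (j : ℕ)))
        = ζ ^ (a t * ((i : ℕ) + 1)) := by
    intro i
    by_cases hi : (i : ℕ) = n.totient - 1
    · -- last column
      have hμ : IsPrimitiveRoot (ζ ^ (a t)) n := hζ.pow_of_coprime _ (hcop t)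
      have hroot : ((Polynomial.cyclotomic n ℂ).IsRoot (ζ ^ (a t))) :=
        (Polynomial.isRoot_cyclotomic_iff_charZero (by omega)).mpr hμ
      have hev : (Polynomial.cyclotomic n ℂ).eval (ζ ^ (a t)) = 0 := hroot
      rw [Polynomial.eval_eq_sum_range, natDegree_cyclotomic, Finset.sum_range_succ] at hev
      have hcoeffs : ∀ m : ℕ, (Polynomial.cyclotomic n ℂ).coeff m
          = ((Polynomial.cyclotomic n ℤ).coeff m : ℂ) := by
        intro m
        rw [← Polynomial.map_cyclotomic_int n ℂ, Polynomial.coeff_map]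
        rfl
      have hcd : (Polynomial.cyclotomic n ℂ).coeff n.totient = 1 := by
        have := (Polynomial.cyclotomic.monic n ℂ).coeff_natDegree
        rwa [natDegree_cyclotomic] at this
      rw [hcd, one_mul] at hev
      have hsum : ∑ m ∈ Finset.range n.totient,
          (Polynomial.cyclotomic n ℂ).coeff m * (ζ ^ (a t)) ^ m
          = ∑ j : Fin n.totient, ((Polynomial.cyclotomic n ℤ).coeff (j : ℕ) : ℂ)
            * ζ ^ (a t * (j : ℕ)) := by
        rw [← Fin.sum_univ_eq_sum_range (fun m =>
          (Polynomial.cyclotomic n ℂ).coeff m * (ζ ^ (a t)) ^ m)]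
        refine Finset.sum_congr rfl fun j _ => ?_
        rw [hcoeffs, ← pow_mul]
      rw [hsum] at hev
      have hCval : ∀ j : Fin n.totient, ((cyclotomicCompanion n j i : ℤ) : ℂ)
          = -((Polynomial.cyclotomic n ℤ).coeff (j : ℕ) : ℂ) := by
        intro j
        simp [cyclotomicCompanion, companionMatrix, hi]
      rw [Finset.sum_congr rfl fun j _ => by rw [hCval j]]
      have hi1 : (i : ℕ) + 1 = n.totient := by
        have := i.isLt; omega
      rw [hi1, pow_mul]
      calc ∑ j : Fin n.totient, -((Polynomial.cyclotomic n ℤ).coeff (j : ℕ) : ℂ)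
            * ζ ^ (a t * (j : ℕ))
          = -(∑ j : Fin n.totient, ((Polynomial.cyclotomic n ℤ).coeff (j : ℕ) : ℂ)
            * ζ ^ (a t * (j : ℕ))) := by
            rw [← Finset.sum_neg_distrib]
            exact Finset.sum_congr rfl fun j _ => by ring
        _ = (ζ ^ (a t)) ^ n.totient := by linear_combination -hev
    · -- subdiagonal column
      have hlt : (i : ℕ) + 1 < n.totient := by
        have := i.isLt
        have h0 : 0 < n.totient := Nat.totient_pos.mpr (by omega)
        omega
      have hterm : ∀ j : Fin n.totient,
          ((cyclotomicCompanion n j i : ℤ) : ℂ) * ζ ^ (a t * (j : ℕ))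
            = if j = (⟨(i : ℕ) + 1, hlt⟩ : Fin n.totient) then ζ ^ (a t * (j : ℕ)) else 0 := by
        intro j
        by_cases h : (j : ℕ) = (i : ℕ) + 1
        · rw [if_pos (Fin.ext h)]
          simp [cyclotomicCompanion, companionMatrix, hi, h]
        · rw [if_neg (fun hh => h (by rw [hh]))]
          simp [cyclotomicCompanion, companionMatrix, hi, h]
      rw [Finset.sum_congr rfl fun j _ => hterm j, Finset.sum_ite_eq' Finset.univ]
      simp
  rw [phi_apply]
  have hMy : ∀ j : Fin n.totient,
      ((Matrix.toLin' (cyclotomicCompanion n) y) j : ℂ)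
        = ∑ i : Fin n.totient, ((cyclotomicCompanion n j i : ℤ) : ℂ) * (y i : ℂ) := by
    intro j
    rw [Matrix.toLin'_apply]
    rw [Matrix.mulVec]
    push_cast [dotProduct]
    rfl
  calc ∑ j : Fin n.totient, ((Matrix.toLin' (cyclotomicCompanion n) y) j : ℂ)
        * ζ ^ (a t * (j : ℕ))
      = ∑ j : Fin n.totient, ∑ i : Fin n.totient,
          (y i : ℂ) * (((cyclotomicCompanion n j i : ℤ) : ℂ) * ζ ^ (a t * (j : ℕ))) := by
        refine Finset.sum_congr rfl fun j _ => ?_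
        rw [hMy, Finset.sum_mul]
        exact Finset.sum_congr rfl fun i _ => by ring
    _ = ∑ i : Fin n.totient, (y i : ℂ)
          * (∑ j : Fin n.totient, ((cyclotomicCompanion n j i : ℤ) : ℂ) * ζ ^ (a t * (j : ℕ))) := by
        rw [Finset.sum_comm]
        exact Finset.sum_congr rfl fun i _ => by rw [Finset.mul_sum]
    _ = ∑ i : Fin n.totient, (y i : ℂ) * ζ ^ (a t * ((i : ℕ) + 1)) := by
        exact Finset.sum_congr rfl fun i _ => by rw [hcol i]
    _ = ζ ^ (a t) * ∑ i : Fin n.totient, (y i : ℂ) * ζ ^ (a t * (i : ℕ)) := by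
        rw [Finset.mul_sum]
        refine Finset.sum_congr rfl fun i _ => ?_
        rw [Nat.mul_succ, pow_add]
        ring

lemma phi_pow (hn : 7 ≤ n) (a : Fin 3 → ℕ) (ζ : ℂ) (hζ : IsPrimitiveRoot ζ n)
    (hcop : ∀ t, Nat.Coprime (a t) n) (k : ℕ) (j : Fin n.totient) (t : Fin 3) :
    phiMap n.totient a ζ (((Matrix.toLin' (cyclotomicCompanion n)) ^ k) (Pi.single j 1)) t
      = ζ ^ (a t * k) * ζ ^ (a t * (j : ℕ)) := by
  induction k with
  | zero => simp [phi_single]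
  | succ k ih =>
    rw [pow_succ', Module.End.mul_apply, phi_eigen hn a ζ hζ hcop, ih,
      Nat.mul_succ, pow_add]
    ring


noncomputable def altDet (d : ℕ) (a : Fin 3 → ℕ) (ζ : ℂ) : (Fin d → ℤ) [⋀^Fin 3]→ₗ[ℤ] ℂ where
  toMultilinearMap :=
    ((Matrix.detRowAlternating (n := Fin 3) (R := ℂ)).toMultilinearMap.restrictScalars
      ℤ).compLinearMap (fun _ => phiMap d a ζ)
  map_eq_zero_of_eq' v i j hv hij := by
    have : (fun s => phiMap d a ζ (v s)) i = (fun s => phiMap d a ζ (v s)) j := by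
      simp [hv]
    exact Matrix.det_zero_of_row_eq hij this

theorem altDet_apply (d : ℕ) (a : Fin 3 → ℕ) (ζ : ℂ) (v : Fin 3 → (Fin d → ℤ)) :
    altDet d a ζ v = Matrix.det (Matrix.of fun s t => phiMap d a ζ (v s) t) := rfl


theorem exists_b (n : ℕ) (hn : 7 ≤ n) (hd : 2 * Nat.totient n ≥ n + 5) :
    ∃ b : ℕ, b < n ∧ Nat.Coprime b n ∧ Nat.Coprime (b + 1) n ∧
      b ≠ 1 ∧ b ≠ n - 2 ∧ 2 * b ≠ n - 1 := by
  by_contra hcon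
  push_neg at hcon
  have ht : ((range n).filter (fun b => n.Coprime b)).card = Nat.totient n :=
    (Nat.totient_eq_card_coprime n).symm
  have h : ((range n).filter (fun b => n.Coprime b)).card
      + ((range n).filter (fun b => ¬ n.Coprime b)).card = n := by
    simpa using Finset.card_filter_add_card_filter_not
      (s := range n) (p := fun b => n.Coprime b)
  have hScard : ((range n).filter (fun b => ¬ n.Coprime b)).card = n - Nat.totient n := by
    omega
  have hTcard : ((range n).filter (fun b => ¬ n.Coprime (b + 1))).card
      ≤ ((range n).filter (fun b => ¬ n.Coprime b)).card := by
    apply Finset.card_le_card_of_injOn (fun b => (b + 1) % n)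
    · intro b hb
      simp only [mem_coe, mem_filter, mem_range] at hb ⊢
      refine ⟨Nat.mod_lt _ (by omega), ?_⟩
      rcases eq_or_lt_of_le (show b + 1 ≤ n by omega) with h | h
      · rw [h, Nat.mod_self]
        simp [Nat.Coprime]
        omega
      · rw [Nat.mod_eq_of_lt h]
        exact hb.2
    · intro x hx y hy hxy
      simp only [mem_filter, mem_range, coe_filter, Set.mem_setOf_eq] at hx hy
      have ex : (x + 1) % n = if x + 1 = n then 0 else x + 1 := by
        split
        · simp [*]
        · exact Nat.mod_eq_of_lt (by omega)
      have ey : (y + 1) % n = if y + 1 = n then 0 else y + 1 := by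
        split
        · simp [*]
        · exact Nat.mod_eq_of_lt (by omega)
      simp only [ex, ey] at hxy
      split_ifs at hxy <;> omega
  have hsub : range n ⊆ (range n).filter (fun b => ¬ n.Coprime b)
      ∪ (range n).filter (fun b => ¬ n.Coprime (b + 1)) ∪ {1, n - 2, (n - 1) / 2} := by
    intro b hb
    simp only [mem_range] at hb
    have hb' := hcon b hb
    simp only [mem_union, mem_insert, mem_singleton, mem_filter, mem_range]
    by_cases h1 : n.Coprime b
    · by_cases h2 : n.Coprime (b + 1)
      · by_cases h3 : b = 1
        · tauto
        · by_cases h4 : b = n - 2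
          · tauto
          · have h5 := hb' (Nat.coprime_comm.mp h1) (Nat.coprime_comm.mp h2) h3 h4
            right; right; right
            omega
      · tauto
    · tauto
  have hcard := Finset.card_le_card hsub
  have h3 : ((range n).filter (fun b => ¬ n.Coprime b)
      ∪ (range n).filter (fun b => ¬ n.Coprime (b + 1))
      ∪ ({1, n - 2, (n - 1) / 2} : Finset ℕ)).card ≤
      ((range n).filter (fun b => ¬ n.Coprime b)).card
      + ((range n).filter (fun b => ¬ n.Coprime (b + 1))).card + 3 := by
    refine le_trans (Finset.card_union_le _ _) ?_
    have h4 : ({1, n - 2, (n - 1) / 2} : Finset ℕ).card ≤ 3 := by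
      refine le_trans (Finset.card_insert_le _ _) ?_
      exact Nat.succ_le_succ (le_trans (Finset.card_insert_le _ _) (by simp))
    have h5 := Finset.card_union_le ((range n).filter (fun b => ¬ n.Coprime b))
      ((range n).filter (fun b => ¬ n.Coprime (b + 1)))
    omega
  rw [Finset.card_range] at hcard
  have htot : Nat.totient n ≤ n := Nat.totient_le n
  omega

lemma totient_pos' (hn : 7 ≤ n) : 0 < n.totient := Nat.totient_pos.mpr (by omega)

lemma comp_single (j : Fin n.totient) :
    Matrix.toLin' (cyclotomicCompanion n) (Pi.single j 1) =
      fun i => cyclotomicCompanion n i j := by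
  rw [Matrix.toLin'_apply, Matrix.mulVec_single]
  funext i
  simp

lemma comp_single_lt (j k : Fin n.totient) (hjk : (j : ℕ) + 1 = (k : ℕ)) :
    Matrix.toLin' (cyclotomicCompanion n) (Pi.single j 1) = Pi.single k 1 := by
  rw [comp_single]
  funext i
  have hj : (j : ℕ) ≠ n.totient - 1 := by have := k.isLt; omega
  simp only [cyclotomicCompanion, companionMatrix, Matrix.of_apply, if_neg hj, hjk,
    Pi.single_apply, Fin.val_eq_val]

lemma comp_single_last (j : Fin n.totient) (hj : (j : ℕ) = n.totient - 1) :
    Matrix.toLin' (cyclotomicCompanion n) (Pi.single j 1) =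
      fun i : Fin n.totient => -(Polynomial.cyclotomic n ℤ).coeff (i : ℕ) := by
  rw [comp_single]
  funext i
  simp [cyclotomicCompanion, companionMatrix, hj]

lemma pow_single (hn : 7 ≤ n) : ∀ k, (hk : k < n.totient) →
    ((Matrix.toLin' (cyclotomicCompanion n)) ^ k) (Pi.single (⟨0, totient_pos' hn⟩ : Fin n.totient) 1)
      = Pi.single (⟨k, hk⟩ : Fin n.totient) 1 := by
  intro k
  induction k with
  | zero => intro hk; simp
  | succ k ih =>
    intro hk
    rw [pow_succ', Module.End.mul_apply, ih (by omega)]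
    exact comp_single_lt _ _ rfl

lemma pow_fin (hn : 7 ≤ n) (j : Fin n.totient) :
    ((Matrix.toLin' (cyclotomicCompanion n)) ^ (j : ℕ))
      (Pi.single (⟨0, totient_pos' hn⟩ : Fin n.totient) 1) = Pi.single j 1 := by
  simpa using pow_single hn j j.isLt

lemma pow_totient_e0 (hn : 7 ≤ n) :
    ((Matrix.toLin' (cyclotomicCompanion n)) ^ n.totient)
      (Pi.single (⟨0, totient_pos' hn⟩ : Fin n.totient) 1)
      = fun i : Fin n.totient => -(Polynomial.cyclotomic n ℤ).coeff (i : ℕ) := by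
  have hd : 0 < n.totient := totient_pos' hn
  have e : n.totient - 1 + 1 = n.totient := by omega
  rw [show (Matrix.toLin' (cyclotomicCompanion n)) ^ n.totient =
      (Matrix.toLin' (cyclotomicCompanion n)) ^ (n.totient - 1 + 1) by rw [e], pow_succ', Module.End.mul_apply, pow_single hn (n.totient - 1) (by omega)]
  exact comp_single_last _ rfl

lemma aeval_e0 (hn : 7 ≤ n) :
    (Polynomial.aeval (Matrix.toLin' (cyclotomicCompanion n)) (Polynomial.cyclotomic n ℤ))
      (Pi.single (⟨0, totient_pos' hn⟩ : Fin n.totient) 1) = 0 := by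
  set M := Matrix.toLin' (cyclotomicCompanion n) with hM
  set e0 : Fin n.totient → ℤ := Pi.single (⟨0, totient_pos' hn⟩ : Fin n.totient) 1 with he0
  rw [Polynomial.aeval_eq_sum_range, natDegree_cyclotomic]
  rw [LinearMap.coe_sum, Finset.sum_apply, Finset.sum_range_succ]
  have hcd : (Polynomial.cyclotomic n ℤ).coeff n.totient = 1 := by
    have := (Polynomial.cyclotomic.monic n ℤ).coeff_natDegree
    rwa [natDegree_cyclotomic] at this
  have hrange : ∀ i ∈ Finset.range n.totient,
      ((Polynomial.cyclotomic n ℤ).coeff i • M ^ i) e0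
        = (Polynomial.cyclotomic n ℤ).coeff i • ((M ^ i) e0) := fun i _ => rfl
  have hsum : ∑ i ∈ Finset.range n.totient,
      ((Polynomial.cyclotomic n ℤ).coeff i • M ^ i) e0
      = ∑ i : Fin n.totient, (Polynomial.cyclotomic n ℤ).coeff (i : ℕ) • Pi.single i 1 := by
    rw [← Fin.sum_univ_eq_sum_range
      (fun i => ((Polynomial.cyclotomic n ℤ).coeff i • M ^ i) e0)]
    refine Finset.sum_congr rfl fun i _ => ?_
    rw [LinearMap.smul_apply, pow_fin hn i]
  rw [hsum, LinearMap.smul_apply, hcd, pow_totient_e0 hn]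
  funext j
  simp only [Finset.sum_apply, Pi.smul_apply, Pi.single_apply, smul_eq_mul, mul_ite, mul_one,
    mul_zero, Pi.add_apply, one_smul]
  rw [Finset.sum_ite_eq Finset.univ j (fun i => (Polynomial.cyclotomic n ℤ).coeff (i : ℕ))]
  simp

lemma pow_n_single (hn : 7 ≤ n) (j : Fin n.totient) :
    ((Matrix.toLin' (cyclotomicCompanion n)) ^ n) (Pi.single j 1) = Pi.single j 1 := by
  set M := Matrix.toLin' (cyclotomicCompanion n) with hM
  set e0 : Fin n.totient → ℤ := Pi.single (⟨0, totient_pos' hn⟩ : Fin n.totient) 1 with he0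
  obtain ⟨q, hq⟩ := Polynomial.cyclotomic.dvd_X_pow_sub_one n ℤ
  have h1 : (M ^ n) e0 = e0 := by
    have h2 : (Polynomial.aeval M ((Polynomial.X : Polynomial ℤ) ^ n - 1)) e0 = 0 := by
      rw [hq, mul_comm, map_mul, Module.End.mul_apply, aeval_e0 hn, map_zero]
    rw [map_sub, map_one, Polynomial.aeval_X_pow, LinearMap.sub_apply, Module.End.one_apply,
      sub_eq_zero] at h2
    exact h2
  calc (M ^ n) (Pi.single j 1) = (M ^ n) ((M ^ (j : ℕ)) e0) := by rw [pow_fin hn j]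
    _ = (M ^ (j : ℕ)) ((M ^ n) e0) := by
        rw [← Module.End.mul_apply, ← Module.End.mul_apply, pow_mul_comm]
    _ = Pi.single j 1 := by rw [h1, pow_fin hn j]


end Stmt4

open Stmt4 in
/-- For odd `n ≥ 7` with `d = φ(n)` and `2d ≥ n + 5`, there is an odd `l`,
`0 < l < d`, and a nonzero element of `Λ^l ℤ^d` fixed by the map induced by
`C_n`; in particular `∑_{l} rank_ℤ((Λ^{2l+1}ℤ^d)^{ℤ_n}) > 0`. -/
theorem stmt_4 (n : ℕ) (hn : 7 ≤ n) (hodd : Odd n)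
    (hd : 2 * Nat.totient n ≥ n + 5) :
    ∃ l : ℕ, Odd l ∧ 0 < l ∧ l < Nat.totient n ∧
      ∃ v ∈ ⋀[ℤ]^l (Fin (Nat.totient n) → ℤ), v ≠ 0 ∧
        (∀ k : ℕ,
          ExteriorAlgebra.map (Matrix.toLin' ((cyclotomicCompanion n) ^ k)) v = v) := by
  classical
  have htotle : Nat.totient n ≤ n := Nat.totient_le n
  have hd6 : 6 ≤ n.totient := by omega
  -- choose exponents
  obtain ⟨b, hbn, hb1, hb2, hbne1, hbne2, hbne3⟩ := exists_b n hn hd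
  have hbub : b ≤ n - 2 := by
    rcases Nat.lt_or_ge b (n - 1) with h | h
    · omega
    · exfalso
      have hb : b = n - 1 := by omega
      rw [hb, show n - 1 + 1 = n by omega] at hb2
      simp [Nat.Coprime, Nat.gcd_self] at hb2
      omega
  have hb0 : 1 ≤ b := by
    rcases Nat.eq_zero_or_pos b with h | h
    · rw [h] at hb1
      simp [Nat.Coprime] at hb1
      omega
    · omega
  set a : Fin 3 → ℕ := ![1, b, n - 1 - b] with ha
  have ha0 : a 0 = 1 := rfl
  have ha1 : a 1 = b := rfl
  have ha2 : a 2 = n - 1 - b := rfl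
  have ha_cop : ∀ t, Nat.Coprime (a t) n := by
    intro t
    fin_cases t
    · exact Nat.coprime_one_left n
    · exact hb1
    · show Nat.Coprime (n - 1 - b) n
      rw [← Nat.isCoprime_iff_coprime]
      have e : ((n - 1 - b : ℕ) : ℤ) = -((b : ℤ) + 1) + (n : ℤ) * 1 := by omega
      rw [e]
      refine IsCoprime.add_mul_left_left ?_ 1
      refine IsCoprime.neg_left ?_
      have := Nat.isCoprime_iff_coprime.mpr hb2
      push_cast at this ⊢
      exact this
  have ha_lt : ∀ t, a t < n := by
    intro t
    fin_cases t <;> simp [ha] <;> omega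
  have ha_sum : a 0 + a 1 + a 2 = n := by
    rw [ha0, ha1, ha2]; omega
  have ha_ne : ∀ t t' : Fin 3, t ≠ t' → a t ≠ a t' := by
    intro t t' htt
    fin_cases t <;> fin_cases t' <;>
      simp_all [ha0, ha1, ha2] <;> omega
  set ζ : ℂ := Complex.exp (2 * Real.pi * Complex.I / n) with hζdef
  have hζ : IsPrimitiveRoot ζ n := Complex.isPrimitiveRoot_exp n (by omega)
  set M := Matrix.toLin' (cyclotomicCompanion n) with hM
  set es : Fin 3 → (Fin (Nat.totient n) → ℤ) :=
    fun s => Pi.single (⟨(s : ℕ), by have := s.isLt; omega⟩ : Fin (Nat.totient n)) 1 with hes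
  set W : ℕ → ExteriorAlgebra ℤ (Fin (Nat.totient n) → ℤ) :=
    fun k => ExteriorAlgebra.ιMulti ℤ 3 (fun s => (M ^ k) (es s)) with hW
  refine ⟨3, ⟨1, by norm_num⟩, by norm_num, by omega,
    ∑ k ∈ Finset.range n, W k, ?_, ?_, ?_⟩
  · -- membership
    refine Submodule.sum_mem _ fun k _ => ?_
    exact ExteriorAlgebra.ιMulti_range ℤ 3 (Set.mem_range_self _)
  · -- nonzero
    set F := ExteriorAlgebra.liftAlternating
      (Function.update
        (fun i => (0 : (Fin (Nat.totient n) → ℤ) [⋀^Fin i]→ₗ[ℤ] ℂ)) 3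
        (altDet (Nat.totient n) a ζ)) with hF
    have hF3 : ∀ g : Fin 3 → (Fin (Nat.totient n) → ℤ),
        F (ExteriorAlgebra.ιMulti ℤ 3 g) = altDet (Nat.totient n) a ζ g := by
      intro g
      rw [hF, ExteriorAlgebra.liftAlternating_apply_ιMulti, Function.update_self]
    have hdetV : Matrix.det (Matrix.vandermonde fun t : Fin 3 => ζ ^ a t) ≠ 0 := by
      rw [Matrix.det_vandermonde]
      refine Finset.prod_ne_zero_iff.mpr fun i _ => ?_
      refine Finset.prod_ne_zero_iff.mpr fun j hj => ?_
      rw [sub_ne_zero]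
      intro hEq
      have hji : a j = a i := hζ.pow_inj (ha_lt j) (ha_lt i) hEq
      have : i < j := Finset.mem_Ioi.mp hj
      exact ha_ne j i (by intro h; rw [h] at this; exact lt_irrefl i this) hji
    have hFW : ∀ k, F (W k)
        = Matrix.det (Matrix.vandermonde fun t : Fin 3 => ζ ^ a t) := by
      intro k
      rw [hW]
      rw [hF3, altDet_apply]
      have hmat : (Matrix.of fun s t => phiMap (Nat.totient n) a ζ ((M ^ k) (es s)) t)
          = (Matrix.vandermonde fun t : Fin 3 => ζ ^ a t).transpose
            * Matrix.diagonal (fun t => ζ ^ (a t * k)) := by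
        ext s t
        rw [Matrix.mul_diagonal, Matrix.transpose_apply, Matrix.vandermonde]
        rw [Matrix.of_apply, hes]
        rw [hM, phi_pow hn a ζ hζ ha_cop k _ t]
        rw [Matrix.of_apply]
        rw [← pow_mul]
        ring
      rw [hmat, Matrix.det_mul, Matrix.det_transpose, Matrix.det_diagonal]
      have hprod : ∏ t : Fin 3, ζ ^ (a t * k) = 1 := by
        rw [Finset.prod_pow_eq_pow_sum]
        have hsum3 : ∑ t : Fin 3, a t * k = n * k := by
          rw [← Finset.sum_mul, Fin.sum_univ_three, ha_sum]
        rw [hsum3, pow_mul, hζ.pow_eq_one, one_pow]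
      rw [hprod, mul_one]
    intro h0
    have hFv : F (∑ k ∈ Finset.range n, W k)
        = (n : ℂ) * Matrix.det (Matrix.vandermonde fun t : Fin 3 => ζ ^ a t) := by
      rw [map_sum]
      rw [Finset.sum_congr rfl fun k _ => hFW k]
      rw [Finset.sum_const, Finset.card_range, nsmul_eq_mul]
    rw [h0, map_zero] at hFv
    exact mul_ne_zero (Nat.cast_ne_zero.mpr (by omega)) hdetV hFv.symm
  · -- fixed
    have hWper : W n = W 0 := by
      have he : (fun s => (M ^ n) (es s)) = fun s => (M ^ 0) (es s) := by
        funext s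
        rw [hM, hes, pow_n_single hn, pow_zero, Module.End.one_apply]
      show (ExteriorAlgebra.ιMulti ℤ 3) (fun s => (M ^ n) (es s))
          = (ExteriorAlgebra.ιMulti ℤ 3) (fun s => (M ^ 0) (es s))
      rw [he]
    have hmapW : ∀ k, ExteriorAlgebra.map M (W k) = W (k + 1) := by
      intro k
      rw [hW, ExteriorAlgebra.map_apply_ιMulti]
      congr 1
      funext s
      rw [Function.comp_apply, ← Module.End.mul_apply, ← pow_succ']
    have hEv : ExteriorAlgebra.map M (∑ k ∈ Finset.range n, W k)
        = ∑ k ∈ Finset.range n, W k := by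
      rw [map_sum]
      rw [Finset.sum_congr rfl fun k _ => hmapW k]
      have h1 := Finset.sum_range_succ W n
      have h2 := Finset.sum_range_succ' W n
      rw [h1, hWper] at h2
      exact add_right_cancel h2.symm
    have hfix : ∀ k, ExteriorAlgebra.map (M ^ k) (∑ k ∈ Finset.range n, W k)
        = ∑ k ∈ Finset.range n, W k := by
      intro k
      induction k with
      | zero =>
        rw [pow_zero, show (1 : Module.End ℤ (Fin (Nat.totient n) → ℤ)) = LinearMap.id from rfl,
          ExteriorAlgebra.map_id]
        rfl
      | succ k ih =>
        rw [pow_succ', Module.End.mul_eq_comp, ← ExteriorAlgebra.map_comp_map, AlgHom.comp_apply,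
          ih, hEv]
    intro k
    have hTL : Matrix.toLin' (cyclotomicCompanion n ^ k) = M ^ k := by
      induction k with
      | zero => rw [pow_zero, pow_zero, Matrix.toLin'_one]; rfl
      | succ k ih =>
        rw [pow_succ, Matrix.toLin'_mul, ih, ← Module.End.mul_eq_comp, ← pow_succ]
    rw [hTL]
    exact hfix k
end

section
/- Let n ≥ 7 be odd and d = φ(n). Then 2d ≥ n + 5 if and only if there exists a partition {I, J} of {1, ..., d} such that both |I| and |J| are odd and the set of differences J - I = {j - i : i ∈ I, j ∈ J} is congruent to {1, 2, ..., n-1} modulo n (i.e., every nonzero residue class mod n is represented by some j - i and every j - i is congruent to some element of {1,...,n-1} mod n). -/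
/-- `J - I` is congruent to `{1, 2, …, n-1}` modulo `n`: every difference
`j - i` is congruent mod `n` to some element of `{1, …, n-1}`, and every
element of `{1, …, n-1}` is congruent mod `n` to some difference `j - i`. -/
def DiffModEqFull (n : ℕ) (I J : Finset ℤ) : Prop :=
  (∀ i ∈ I, ∀ j ∈ J, ∃ r : ℤ, 1 ≤ r ∧ r ≤ (n : ℤ) - 1 ∧ j - i ≡ r [ZMOD (n : ℤ)]) ∧
  (∀ r : ℤ, 1 ≤ r → r ≤ (n : ℤ) - 1 → ∃ i ∈ I, ∃ j ∈ J, j - i ≡ r [ZMOD (n : ℤ)])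

/-- If `a ≡ r [ZMOD N]` with `|a| < N` and `1 ≤ r ≤ N-1`, then `a = r` or `a = r - N`. -/
lemma aux_rep (N a r : ℤ) (hN : 0 < N) (h : a ≡ r [ZMOD N])
    (ha1 : -N < a) (ha2 : a < N) (hr1 : 1 ≤ r) (hr2 : r ≤ N - 1) :
    a = r ∨ a = r - N := by
  obtain ⟨t, ht⟩ := Int.modEq_iff_add_fac.mp h
  -- r = a + N * t
  have htt : t = 0 ∨ t = 1 := by
    rcases le_or_gt t (-1) with h' | h'
    · exfalso
      have : N * t ≤ N * (-1) := mul_le_mul_of_nonneg_left h' hN.le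
      rw [mul_neg_one] at this
      linarith
    rcases le_or_gt 2 t with h'' | h''
    · exfalso
      have : N * 2 ≤ N * t := mul_le_mul_of_nonneg_left h'' hN.le
      linarith
    omega
  rcases htt with rfl | rfl
  · left; rw [mul_zero] at ht; omega
  · right; rw [mul_one] at ht; omega

/-- If `a ≡ b [ZMOD N]` and `|a - b| < N` then `a = b`. -/
lemma aux_eq (N a b : ℤ) (hN : 0 < N) (h : a ≡ b [ZMOD N])
    (h1 : -N < a - b) (h2 : a - b < N) : a = b := by
  obtain ⟨t, ht⟩ := Int.modEq_iff_add_fac.mp h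
  have htt : t = 0 := by
    rcases le_or_gt t (-1) with h' | h'
    · exfalso
      have : N * t ≤ N * (-1) := mul_le_mul_of_nonneg_left h' hN.le
      rw [mul_neg_one] at this
      linarith
    rcases le_or_gt 1 t with h'' | h''
    · exfalso
      have : N * 1 ≤ N * t := mul_le_mul_of_nonneg_left h'' hN.le
      linarith
    omega
  subst htt; rw [mul_zero] at ht; omega

/-- In the case `n = 2d - 3`, it is impossible that `1 ∈ I` and `d ∈ J`. -/
lemma noSplit (D : ℤ) (I J : Finset ℤ) (hD : 6 ≤ D)
    (hU : I ∪ J = Finset.Icc 1 D) (hdisj : Disjoint I J)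
    (hrep : ∀ r : ℤ, 1 ≤ r → r ≤ 2*D - 4 →
      ∃ i ∈ I, ∃ j ∈ J, (j - i = r ∨ j - i = r - (2*D - 3)))
    (h1 : (1:ℤ) ∈ I) (hd : D ∈ J) : False := by
  have hdis : ∀ x : ℤ, x ∈ I → x ∈ J → False :=
    fun x a b => Finset.disjoint_left.mp hdisj a b
  have hbI : ∀ x ∈ I, 1 ≤ x ∧ x ≤ D := by
    intro x hx
    have : x ∈ Finset.Icc 1 D := hU ▸ Finset.mem_union_left J hx
    simpa [Finset.mem_Icc] using this
  have hbJ : ∀ x ∈ J, 1 ≤ x ∧ x ≤ D := by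
    intro x hx
    have : x ∈ Finset.Icc 1 D := hU ▸ Finset.mem_union_right I hx
    simpa [Finset.mem_Icc] using this
  obtain ⟨i, hi, j, hj, heq⟩ := hrep (D - 2) (by omega) (by omega)
  have hbi := hbI i hi
  have hbj := hbJ j hj
  have h2 : (2:ℤ) ∈ I ∨ (D - 1) ∈ J := by
    rcases heq with h | h
    · have hij : (i = 1 ∧ j = D - 1) ∨ (i = 2 ∧ j = D) := by omega
      rcases hij with ⟨hA, hB⟩ | ⟨hA, hB⟩
      · exact Or.inr (hB ▸ hj)
      · exact Or.inl (hA ▸ hi)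
    · exfalso
      have : i = D := by omega
      exact hdis D (this ▸ hi) hd
  obtain ⟨i', hi', j', hj', heq'⟩ := hrep D (by omega) (by omega)
  have hbi' := hbI i' hi'
  have hbj' := hbJ j' hj'
  have hcase : (i' = D - 2 ∧ j' = 1) ∨ (i' = D - 1 ∧ j' = 2) ∨ (i' = D ∧ j' = 3) := by
    omega
  rcases hcase with ⟨hA, hB⟩ | ⟨hA, hB⟩ | ⟨hA, hB⟩
  · exact hdis 1 h1 (hB ▸ hj')
  · rcases h2 with h2 | h2
    · exact hdis 2 h2 (hB ▸ hj')
    · exact hdis (D-1) (hA ▸ hi') h2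
  · exact hdis D (hA ▸ hi') hd

/-- In the case `n = 2d - 3`, if `1, d ∈ I` then all of `2, …, d-1` lie in `J`. -/
lemma core (D : ℤ) (I J : Finset ℤ) (hD : 6 ≤ D)
    (hU : I ∪ J = Finset.Icc 1 D) (hdisj : Disjoint I J)
    (hrep : ∀ r : ℤ, 1 ≤ r → r ≤ 2*D - 4 →
      ∃ i ∈ I, ∃ j ∈ J, (j - i = r ∨ j - i = r - (2*D - 3)))
    (h1 : (1:ℤ) ∈ I) (hd : D ∈ I) :
    ∀ m : ℤ, 2 ≤ m → m ≤ D - 1 → m ∈ J := by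
  have hdis : ∀ x : ℤ, x ∈ I → x ∈ J → False :=
    fun x a b => Finset.disjoint_left.mp hdisj a b
  have hbI : ∀ x ∈ I, 1 ≤ x ∧ x ≤ D := by
    intro x hx
    have : x ∈ Finset.Icc 1 D := hU ▸ Finset.mem_union_left J hx
    simpa [Finset.mem_Icc] using this
  have hbJ : ∀ x ∈ J, 1 ≤ x ∧ x ≤ D := by
    intro x hx
    have : x ∈ Finset.Icc 1 D := hU ▸ Finset.mem_union_right I hx
    simpa [Finset.mem_Icc] using this
  have hor : ∀ x : ℤ, 1 ≤ x → x ≤ D → x ∈ I ∨ x ∈ J := by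
    intro x hx1 hx2
    have : x ∈ I ∪ J := by rw [hU]; exact Finset.mem_Icc.mpr ⟨hx1, hx2⟩
    exact Finset.mem_union.mp this
  have main : ∀ k : ℕ, ∀ m : ℤ, 2 ≤ m → m ≤ D - 1 →
      (m ≤ 1 + (k:ℤ) ∨ D - (k:ℤ) ≤ m) → m ∈ J := by
    intro k
    induction k with
    | zero =>
      intro m h2 h3 h4
      exfalso
      push_cast at h4
      omega
    | succ k ih =>
      intro m h2 h3 h4
      by_cases hc : m ≤ 1 + (k:ℤ) ∨ D - (k:ℤ) ≤ m
      · exact ih m h2 h3 hc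
      push_neg at hc
      obtain ⟨hc1, hc2⟩ := hc
      have hm : m = (k:ℤ) + 2 ∨ m = D - (k:ℤ) - 1 := by push_cast at h4; omega
      rcases hm with hm | hm
      · by_contra hmJ
        have hmI : m ∈ I := (hor m (by omega) (by omega)).resolve_right hmJ
        obtain ⟨i, hi, j, hj, heq⟩ := hrep (D + m - 3) (by omega) (by omega)
        have hbi := hbI i hi
        have hbj := hbJ j hj
        rcases heq with h | h
        · have : j = D := by omega
          exact hdis D hd (this ▸ hj)
        · -- j - i = m - D, so j ∈ [1, m]
          by_cases hj1 : j = 1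
          · exact hdis 1 h1 (hj1 ▸ hj)
          by_cases hj2 : j = m
          · exact hdis m hmI (hj2 ▸ hj)
          have hiJ : i ∈ J := ih i (by omega) (by omega) (by right; omega)
          exact hdis i hi hiJ
      · by_contra hmJ
        have hmI : m ∈ I := (hor m (by omega) (by omega)).resolve_right hmJ
        obtain ⟨i, hi, j, hj, heq⟩ := hrep (m - 1) (by omega) (by omega)
        have hbi := hbI i hi
        have hbj := hbJ j hj
        rcases heq with h | h
        · -- j - i = m - 1
          by_cases hi1 : i = 1
          · have : j = m := by omega
            exact hdis m hmI (this ▸ hj)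
          by_cases hi2 : j = D
          · exact hdis D hd (hi2 ▸ hj)
          have hiJ : i ∈ J := ih i (by omega) (by omega) (by left; omega)
          exact hdis i hi hiJ
        · have : j = 1 := by omega
          exact hdis 1 h1 (this ▸ hj)
  intro m h2 h3
  have hk : ((D - 2).toNat : ℤ) = D - 2 := Int.toNat_of_nonneg (by omega)
  exact main (D - 2).toNat m h2 h3 (by omega)

/-- In the case `n = 2d - 3`, `1, d ∈ I` with `|I|` odd is impossible. -/
lemma bothEnds (D : ℤ) (I J : Finset ℤ) (hD : 6 ≤ D)
    (hU : I ∪ J = Finset.Icc 1 D) (hdisj : Disjoint I J)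
    (hrep : ∀ r : ℤ, 1 ≤ r → r ≤ 2*D - 4 →
      ∃ i ∈ I, ∃ j ∈ J, (j - i = r ∨ j - i = r - (2*D - 3)))
    (h1 : (1:ℤ) ∈ I) (hd : D ∈ I) (hodd : Odd I.card) : False := by
  have hdis : ∀ x : ℤ, x ∈ I → x ∈ J → False :=
    fun x a b => Finset.disjoint_left.mp hdisj a b
  have hbI : ∀ x ∈ I, 1 ≤ x ∧ x ≤ D := by
    intro x hx
    have : x ∈ Finset.Icc 1 D := hU ▸ Finset.mem_union_left J hx
    simpa [Finset.mem_Icc] using this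
  have hmid := core D I J hD hU hdisj hrep h1 hd
  have hIeq : I = {1, D} := by
    apply Finset.Subset.antisymm
    · intro x hx
      have hb := hbI x hx
      simp only [Finset.mem_insert, Finset.mem_singleton]
      by_contra hne
      push_neg at hne
      exact hdis x hx (hmid x (by omega) (by omega))
    · intro x hx
      simp only [Finset.mem_insert, Finset.mem_singleton] at hx
      rcases hx with rfl | rfl
      · exact h1
      · exact hd
  rw [hIeq] at hodd
  have hcard : ({1, D} : Finset ℤ).card = 2 := by
    rw [Finset.card_insert_of_notMem (by simp; omega), Finset.card_singleton]
  rw [hcard] at hodd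
  obtain ⟨w, hw⟩ := hodd
  omega

/-- For odd `n ≥ 7` and `d = φ(n)`: `2d ≥ n + 5` iff there is a partition
`{I, J}` of `{1, …, d}` with `|I|`, `|J|` odd and `J - I ≡ {1, …, n-1} (mod n)`. -/
theorem stmt_6 (n d : ℕ) (hn : 7 ≤ n) (hodd : Odd n) (hd : d = Nat.totient n) :
    2 * d ≥ n + 5 ↔
      ∃ I J : Finset ℤ, I ∪ J = Finset.Icc 1 (d : ℤ) ∧ Disjoint I J ∧
        Odd I.card ∧ Odd J.card ∧ DiffModEqFull n I J := by
  classical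
  have hn2 : 1 < n := by omega
  have hdlt : d < n := hd ▸ Nat.totient_lt n hn2
  have hdeven : Even d := hd ▸ Nat.totient_even (by omega)
  obtain ⟨e, he⟩ := hdeven
  obtain ⟨w, hw⟩ := hodd
  have hNpos : (0:ℤ) < (n:ℤ) := by exact_mod_cast (by omega : 0 < n)
  constructor
  · -- forward: construct the partition
    intro hge
    have hd6 : 6 ≤ d := by omega
    have hD6 : (6:ℤ) ≤ (d:ℤ) := by exact_mod_cast hd6
    have hDn : (d:ℤ) < (n:ℤ) := by exact_mod_cast hdlt
    have hge' : (n:ℤ) + 5 ≤ 2 * (d:ℤ) := by exact_mod_cast hge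
    refine ⟨{1, 2, (d:ℤ)}, Finset.Icc 3 ((d:ℤ) - 1), ?_, ?_, ?_, ?_, ?_, ?_⟩
    · ext x
      simp only [Finset.mem_union, Finset.mem_insert, Finset.mem_singleton, Finset.mem_Icc]
      omega
    · rw [Finset.disjoint_left]
      intro x hx hx2
      simp only [Finset.mem_insert, Finset.mem_singleton] at hx
      simp only [Finset.mem_Icc] at hx2
      omega
    · have : ({1, 2, (d:ℤ)} : Finset ℤ).card = 3 :=
        Finset.card_eq_three.mpr ⟨1, 2, (d:ℤ), by norm_num, by omega, by omega, rfl⟩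
      rw [this]
      exact ⟨1, rfl⟩
    · have : (Finset.Icc (3:ℤ) ((d:ℤ) - 1)).card = d - 3 := by
        rw [Int.card_Icc]; omega
      rw [this]
      exact Nat.odd_iff.mpr (by omega)
    · intro i hi j hj
      simp only [Finset.mem_insert, Finset.mem_singleton] at hi
      rw [Finset.mem_Icc] at hj
      refine ⟨if 0 < j - i then j - i else j - i + n, ?_, ?_, ?_⟩
      · split_ifs with h
        · omega
        · omega
      · split_ifs with h
        · omega
        · omega
      · split_ifs with h
        · exact Int.ModEq.refl _
        · exact Int.modEq_iff_add_fac.mpr ⟨1, by ring⟩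
    · intro r hr1 hr2
      by_cases hcase : r ≤ (d:ℤ) - 2
      · by_cases hr1' : r = 1
        · refine ⟨2, by simp, 3, Finset.mem_Icc.mpr ⟨by omega, by omega⟩, ?_⟩
          rw [show (3:ℤ) - 2 = r by omega]
        · refine ⟨1, by simp, r + 1, Finset.mem_Icc.mpr ⟨by omega, by omega⟩, ?_⟩
          rw [show r + 1 - 1 = r by ring]
      · refine ⟨(d:ℤ), by simp, r + (d:ℤ) - n,
          Finset.mem_Icc.mpr ⟨by omega, by omega⟩, ?_⟩
        have hrw : r + (d:ℤ) - n - (d:ℤ) = r + (n:ℤ) * (-1) := by ring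
        rw [hrw]
        exact (Int.modEq_iff_add_fac.mpr ⟨-1, by ring⟩).symm
  · -- reverse: the partition forces 2d ≥ n + 5
    rintro ⟨I, J, hU, hdisj, hIodd, hJodd, -, hcov⟩
    by_contra hlt
    push_neg at hlt
    have hbI : ∀ x ∈ I, 1 ≤ x ∧ x ≤ (d:ℤ) := by
      intro x hx
      have : x ∈ Finset.Icc 1 (d:ℤ) := hU ▸ Finset.mem_union_left J hx
      simpa [Finset.mem_Icc] using this
    have hbJ : ∀ x ∈ J, 1 ≤ x ∧ x ≤ (d:ℤ) := by
      intro x hx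
      have : x ∈ Finset.Icc 1 (d:ℤ) := hU ▸ Finset.mem_union_right I hx
      simpa [Finset.mem_Icc] using this
    -- Counting: n + 1 ≤ 2d
    set T := Finset.Icc (1 - (d:ℤ)) ((d:ℤ) - 1) with hT
    have hex : ∀ r ∈ Finset.Icc (1:ℤ) ((n:ℤ) - 1), ∃ δ ∈ T, δ ≡ r [ZMOD (n:ℤ)] := by
      intro r hr
      rw [Finset.mem_Icc] at hr
      obtain ⟨i, hi, j, hj, hmod⟩ := hcov r hr.1 hr.2
      have h1 := hbI i hi
      have h2 := hbJ j hj
      exact ⟨j - i, Finset.mem_Icc.mpr ⟨by omega, by omega⟩, hmod⟩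
    have hcard : (Finset.Icc (1:ℤ) ((n:ℤ) - 1)).card ≤ T.card := by
      apply Finset.card_le_card_of_injOn
        (fun r => if h : ∃ δ ∈ T, δ ≡ r [ZMOD (n:ℤ)] then h.choose else 0)
      · intro r hr
        have h := hex r hr
        simp only [dif_pos h]
        exact h.choose_spec.1
      · intro a ha b hb hab
        have hha := hex a ha
        have hhb := hex b hb
        simp only [dif_pos hha, dif_pos hhb] at hab
        have h1 : hha.choose ≡ a [ZMOD (n:ℤ)] := hha.choose_spec.2
        have h2 : hhb.choose ≡ b [ZMOD (n:ℤ)] := hhb.choose_spec.2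
        have h3 : hha.choose ≡ b [ZMOD (n:ℤ)] := by rw [hab]; exact h2
        have h4 : a ≡ b [ZMOD (n:ℤ)] := h1.symm.trans h3
        simp only [Finset.coe_Icc, Set.mem_Icc] at ha hb
        exact aux_eq n a b hNpos h4 (by omega) (by omega)
    rw [hT, Int.card_Icc, Int.card_Icc] at hcard
    have h2cases : 2 * d = n + 1 ∨ 2 * d = n + 3 := by omega
    rcases h2cases with hcase | hcase
    · -- 2d = n + 1
      obtain ⟨i, hi, j, hj, hmod⟩ := hcov ((d:ℤ) - 1) (by omega) (by omega)
      have hbi := hbI i hi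
      have hbj := hbJ j hj
      have hrep1 := aux_rep n (j - i) ((d:ℤ) - 1) hNpos hmod
        (by omega) (by omega) (by omega) (by omega)
      have hij : i = 1 ∧ j = (d:ℤ) := by omega
      obtain ⟨i', hi', j', hj', hmod'⟩ := hcov (d:ℤ) (by omega) (by omega)
      have hbi' := hbI i' hi'
      have hbj' := hbJ j' hj'
      have hrep2 := aux_rep n (j' - i') (d:ℤ) hNpos hmod'
        (by omega) (by omega) (by omega) (by omega)
      have hij' : i' = (d:ℤ) ∧ j' = 1 := by omega
      exact Finset.disjoint_left.mp hdisj (hij'.1 ▸ hi') (hij.2 ▸ hj)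
    · -- 2d = n + 3
      have hd6 : 6 ≤ d := by omega
      have hD6 : (6:ℤ) ≤ (d:ℤ) := by exact_mod_cast hd6
      have hrep : ∀ r : ℤ, 1 ≤ r → r ≤ 2*(d:ℤ) - 4 →
          ∃ i ∈ I, ∃ j ∈ J, (j - i = r ∨ j - i = r - (2*(d:ℤ) - 3)) := by
        intro r h1 h2
        obtain ⟨i, hi, j, hj, hmod⟩ := hcov r (by omega) (by omega)
        have hbi := hbI i hi
        have hbj := hbJ j hj
        have := aux_rep n (j - i) r hNpos hmod (by omega) (by omega) (by omega) (by omega)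
        exact ⟨i, hi, j, hj, by omega⟩
      have h1m : (1:ℤ) ∈ I ∨ (1:ℤ) ∈ J := by
        have : (1:ℤ) ∈ I ∪ J := by rw [hU]; exact Finset.mem_Icc.mpr ⟨le_refl 1, by omega⟩
        exact Finset.mem_union.mp this
      have hdm : ((d:ℤ)) ∈ I ∨ ((d:ℤ)) ∈ J := by
        have : ((d:ℤ)) ∈ I ∪ J := by rw [hU]; exact Finset.mem_Icc.mpr ⟨by omega, le_refl _⟩
        exact Finset.mem_union.mp this
      have hU' : J ∪ I = Finset.Icc 1 (d:ℤ) := by rw [Finset.union_comm]; exact hU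
      have hdisj' := hdisj.symm
      have hrep' : ∀ r : ℤ, 1 ≤ r → r ≤ 2*(d:ℤ) - 4 →
          ∃ i ∈ J, ∃ j ∈ I, (j - i = r ∨ j - i = r - (2*(d:ℤ) - 3)) := by
        intro r h1 h2
        obtain ⟨i, hi, j, hj, heq⟩ := hrep (2*(d:ℤ) - 3 - r) (by omega) (by omega)
        exact ⟨j, hj, i, hi, by omega⟩
      rcases h1m with h1I | h1J <;> rcases hdm with hdI | hdJ
      · exact bothEnds (d:ℤ) I J hD6 hU hdisj hrep h1I hdI hIodd
      · exact noSplit (d:ℤ) I J hD6 hU hdisj hrep h1I hdJ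
      · exact noSplit (d:ℤ) J I hD6 hU' hdisj' hrep' h1J hdI
      · exact bothEnds (d:ℤ) J I hD6 hU' hdisj' hrep' h1J hdJ hJodd
end

section
/- Let n ≥ 7 be odd, d = φ(n), and suppose 2d ≥ n + 5. Then with I = {1, 2, d} and J = {3, 4, ..., d-1}, both |I| and |J| are odd and J - I ≡ {1, 2, ..., n-1} (mod n). -/
/-- For odd `n ≥ 7`, `d = φ(n)` and `2d ≥ n + 5`, the sets `I = {1, 2, d}` and
`J = {3, 4, …, d-1}` have odd cardinality and satisfy
`J - I ≡ {1, …, n-1} (mod n)`. -/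
theorem stmt_7 (n d : ℕ) (hn : 7 ≤ n) (hodd : Odd n) (hd : d = Nat.totient n)
    (h2d : 2 * d ≥ n + 5) :
    Odd ({1, 2, (d : ℤ)} : Finset ℤ).card ∧
    Odd (Finset.Icc (3 : ℤ) ((d : ℤ) - 1)).card ∧
    DiffModEqFull n {1, 2, (d : ℤ)} (Finset.Icc (3 : ℤ) ((d : ℤ) - 1)) := by
  have hd6 : 6 ≤ d := by omega
  have hdn : d ≤ n - 1 := by
    have := Nat.totient_lt n (by omega)
    omega
  have heven : Even d := hd ▸ Nat.totient_even (by omega)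
  obtain ⟨k, hk⟩ := heven
  refine ⟨?_, ?_, ?_, ?_⟩
  · have hcard : ({1, 2, (d : ℤ)} : Finset ℤ).card = 3 := by
      rw [Finset.card_insert_of_notMem (by simp; omega),
        Finset.card_insert_of_notMem (by simp; omega), Finset.card_singleton]
    rw [hcard]; decide
  · rw [Int.card_Icc]
    have : ((d : ℤ) - 1 + 1 - 3).toNat = d - 3 := by omega
    rw [this, Nat.odd_iff]; omega
  · -- forward
    intro i hi j hj
    rw [Finset.mem_Icc] at hj
    simp only [Finset.mem_insert, Finset.mem_singleton] at hi
    have hn0 : (0 : ℤ) < n := by omega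
    have hne : j - i ≠ 0 := by rcases hi with h | h | h <;> omega
    have hbd : -(n : ℤ) < j - i ∧ j - i < n := by
      rcases hi with h | h | h <;> constructor <;> omega
    refine ⟨(j - i) % n, ?_, ?_, ?_⟩
    · have h0 : 0 ≤ (j - i) % n := Int.emod_nonneg _ (by omega)
      rcases eq_or_lt_of_le h0 with h | h
      · exfalso
        have hdvd : (n : ℤ) ∣ j - i := Int.dvd_of_emod_eq_zero h.symm
        have := Int.le_of_dvd (abs_pos.mpr hne) ((dvd_abs _ _).mpr hdvd)
        rcases abs_cases (j - i) with ⟨h1, _⟩ | ⟨h1, _⟩ <;> omega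
      · omega
    · have := Int.emod_lt_of_pos (j - i) hn0
      omega
    · exact ((j - i).emod_emod_of_dvd dvd_rfl).symm
  · -- backward
    intro r h1 h2
    rcases le_or_gt r ((d : ℤ) - 3) with hc | hc
    · exact ⟨2, by simp, r + 2, Finset.mem_Icc.mpr (by omega),
        by simpa using Int.ModEq.refl r⟩
    · rcases eq_or_lt_of_le (Int.add_one_le_of_lt hc) with hc2 | hc2
      · exact ⟨1, by simp, (d : ℤ) - 1, Finset.mem_Icc.mpr (by omega),
          by rw [show (d : ℤ) - 1 - 1 = r by omega]⟩
      · refine ⟨(d : ℤ), by simp, r + d - n, Finset.mem_Icc.mpr (by omega),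
          Int.modEq_iff_dvd.mpr ⟨1, by ring⟩⟩
end

section
/- Let n ≥ 3, d = φ(n), and let θ be an irrational real number. Define Θ := θ ∑_{k=0}^{n-1} (C_n^k)^t (C_n^t - C_n) C_n^k, where C_n is the companion matrix of the n-th cyclotomic polynomial. Then Θ is a real skew-symmetric d × d matrix satisfying C_n^t Θ C_n = Θ, and Θ is nondegenerate: if x ∈ ℤ^d satisfies Θx ∈ ℤ^d, then x = 0. -/
open Matrix

section Aux

open Polynomial

variable {d : ℕ} {p : ℤ[X]}

lemma companion_step (k : ℕ) (hk : k + 1 < d) :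
    (companionMatrix d p) *ᵥ Pi.single (⟨k, by omega⟩ : Fin d) 1
      = Pi.single (⟨k+1, hk⟩ : Fin d) 1 := by
  funext i
  rw [mulVec_single]
  simp only [companionMatrix, of_apply, mul_one, Pi.single_apply, Pi.smul_apply, col_apply, op_smul_eq_mul]
  rw [if_neg (by omega : ¬ (k : ℕ) = d - 1)]
  by_cases h : (i:ℕ) = k+1
  · rw [if_pos h, if_pos (Fin.ext h)]
  · rw [if_neg h, if_neg (by simp [Fin.ext_iff]; omega)]

lemma companion_pow (k : ℕ) (hk : k < d) :
    (companionMatrix d p) ^ k *ᵥ Pi.single (⟨0, by omega⟩ : Fin d) 1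
      = Pi.single (⟨k, hk⟩ : Fin d) 1 := by
  induction k with
  | zero => rw [pow_zero, Matrix.one_mulVec]
  | succ m ih =>
      rw [pow_succ', ← Matrix.mulVec_mulVec, ih (by omega), companion_step m hk]

lemma companion_last (hd : 0 < d) :
    (companionMatrix d p) *ᵥ Pi.single (⟨d-1, by omega⟩ : Fin d) 1
      = fun i : Fin d => -p.coeff (i : ℕ) := by
  funext i
  rw [mulVec_single]
  simp [companionMatrix]

lemma sum_mulVec' {R : Type*} [CommRing R] {m : ℕ} {ι : Type*} (s : Finset ι)
    (A : ι → Matrix (Fin m) (Fin m) R) (v : Fin m → R) :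
    (∑ k ∈ s, A k) *ᵥ v = ∑ k ∈ s, (A k *ᵥ v) := by
  ext i
  simp only [Matrix.mulVec, dotProduct, Finset.sum_apply, Matrix.sum_apply,
    Finset.sum_mul]
  rw [Finset.sum_comm]

lemma companion_aeval_e0 (hm : p.Monic) (hdeg : p.natDegree = d) (hd : 0 < d) :
    (aeval (companionMatrix d p) p) *ᵥ Pi.single (⟨0, hd⟩ : Fin d) 1 = 0 := by
  set C := companionMatrix d p with hCdef
  have hsum : aeval C p = ∑ k ∈ Finset.range (d + 1), p.coeff k • C ^ k := by
    rw [aeval_eq_sum_range' (by omega : p.natDegree < d + 1)]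
  rw [hsum, sum_mulVec', Finset.sum_range_succ]
  have hlast : (p.coeff d • C ^ d) *ᵥ Pi.single (⟨0, hd⟩ : Fin d) 1
      = fun i : Fin d => -p.coeff (i : ℕ) := by
    have h1 : p.coeff d = 1 := by rw [← hdeg]; exact hm.coeff_natDegree
    have h2 : C ^ d = C * C ^ (d - 1) := by
      rw [← pow_succ']; congr 1; omega
    rw [h1, one_smul, h2, ← Matrix.mulVec_mulVec, companion_pow (d-1) (by omega),
      companion_last hd]
  rw [hlast]
  funext i
  simp only [Finset.sum_apply, Pi.add_apply, Pi.zero_apply]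
  have hterm : ∀ k ∈ Finset.range d,
      ((p.coeff k • C ^ k) *ᵥ Pi.single (⟨0, hd⟩ : Fin d) 1) i
        = if (i : ℕ) = k then p.coeff k else 0 := by
    intro k hk
    have hkd : k < d := Finset.mem_range.mp hk
    rw [Matrix.smul_mulVec, companion_pow k hkd]
    simp only [Pi.smul_apply, Pi.single_apply, smul_eq_mul]
    by_cases h : i = (⟨k, hkd⟩ : Fin d)
    · rw [if_pos h, if_pos (by simpa [Fin.ext_iff] using h), mul_one]
    · rw [if_neg h, if_neg (by simpa [Fin.ext_iff] using h), mul_zero]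
  rw [Finset.sum_congr rfl hterm, Finset.sum_ite_eq (Finset.range d) (i : ℕ) (fun k => p.coeff k),
    if_pos (Finset.mem_range.mpr i.2)]
  ring

lemma companion_aeval (hm : p.Monic) (hdeg : p.natDegree = d) (hd : 0 < d) :
    aeval (companionMatrix d p) p = 0 := by
  set C := companionMatrix d p with hCdef
  have hcomm : ∀ j : ℕ, aeval C p * C ^ j = C ^ j * aeval C p := by
    intro j
    calc aeval C p * C ^ j = aeval C (p * X ^ j) := by rw [_root_.map_mul, map_pow, aeval_X]
    _ = aeval C (X ^ j * p) := by rw [mul_comm]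
    _ = C ^ j * aeval C p := by rw [_root_.map_mul, map_pow, aeval_X]
  ext i j
  have h1 : (aeval C p) i j = ((aeval C p) *ᵥ Pi.single j 1) i := by
    rw [mulVec_single]; exact (mul_one _).symm
  have h2 : (Pi.single j (1:ℤ) : Fin d → ℤ) = C ^ (j : ℕ) *ᵥ Pi.single (⟨0, hd⟩ : Fin d) 1 := by
    rw [companion_pow (j : ℕ) j.2]
  rw [h1, h2, Matrix.mulVec_mulVec, hcomm, ← Matrix.mulVec_mulVec,
    companion_aeval_e0 hm hdeg hd, Matrix.mulVec_zero]
  simp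

lemma cyclotomicCompanion_pow (n : ℕ) (hn : 1 ≤ n) :
    (companionMatrix (Nat.totient n) (Polynomial.cyclotomic n ℤ)) ^ n = 1 := by
  set C := companionMatrix (Nat.totient n) (Polynomial.cyclotomic n ℤ)
  obtain ⟨q, hq⟩ := Polynomial.cyclotomic.dvd_X_pow_sub_one n ℤ
  have h0 : aeval C (Polynomial.cyclotomic n ℤ) = 0 :=
    companion_aeval (Polynomial.cyclotomic.monic n ℤ) (Polynomial.natDegree_cyclotomic n ℤ)
      (Nat.totient_pos.mpr (by omega))
  have := congrArg (aeval C) hq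
  rw [map_sub, map_pow, aeval_X, _root_.map_one, _root_.map_mul, h0, zero_mul] at this
  linear_combination (norm := skip) this
  abel

section MapStuff

variable {R : Type*} [CommRing R] {m : ℕ}

lemma aeval_map_matrix {S : Type*} [CommRing S] (f : R →+* S)
    (A : Matrix (Fin m) (Fin m) R) (q : R[X]) :
    aeval (A.map f) (q.map f) = (aeval A q).map f := by
  have h1 : (aeval A q).map f = f.mapMatrix (eval₂ (algebraMap R (Matrix (Fin m) (Fin m) R)) A q) := by
    rw [aeval_def]; rfl
  rw [h1, Polynomial.hom_eval₂, aeval_def, Polynomial.eval₂_map]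
  congr 1
  · ext r : 1
    ext i j
    simp [Matrix.algebraMap_matrix_apply, apply_ite f]

lemma conj_sum_inv (nn : ℕ) (C : Matrix (Fin m) (Fin m) R)
    (f : ℕ → Matrix (Fin m) (Fin m) R)
    (hf : ∀ k, Cᵀ * f k * C = f (k + 1)) (hf0 : f nn = f 0) :
    Cᵀ * (∑ k ∈ Finset.range nn, f k) * C = ∑ k ∈ Finset.range nn, f k := by
  have h1 : Cᵀ * (∑ k ∈ Finset.range nn, f k) * C = ∑ k ∈ Finset.range nn, f (k + 1) := by
    rw [Finset.mul_sum, Finset.sum_mul]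
    exact Finset.sum_congr rfl fun k _ => hf k
  have h2 : (∑ k ∈ Finset.range nn, f (k + 1)) + f 0 = (∑ k ∈ Finset.range nn, f k) + f nn := by
    rw [← Finset.sum_range_succ', Finset.sum_range_succ]
  rw [h1]
  rw [hf0] at h2
  exact add_right_cancel h2

end MapStuff

lemma dotProduct_sum' {R : Type*} [CommRing R] {m : ℕ} {ι : Type*} (s : Finset ι)
    (u : Fin m → R) (w : ι → Fin m → R) :
    u ⬝ᵥ (∑ k ∈ s, w k) = ∑ k ∈ s, u ⬝ᵥ w k := by
  simp only [dotProduct, Finset.sum_apply, Finset.mul_sum]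
  rw [Finset.sum_comm]

lemma cyclotomicCompanion_pow_eq_one (n : ℕ) (hn : 1 ≤ n) :
    (cyclotomicCompanion n) ^ n = 1 := cyclotomicCompanion_pow n hn

section KeyRat

lemma key_rat (n : ℕ) (hn : 3 ≤ n) (v : Fin (Nat.totient n) → ℚ)
    (hv : (∑ k ∈ Finset.range n,
      ((((cyclotomicCompanion n).map (Int.cast : ℤ → ℚ)) ^ k)ᵀ *
        (((cyclotomicCompanion n).map (Int.cast : ℤ → ℚ))ᵀ - (cyclotomicCompanion n).map (Int.cast : ℤ → ℚ)) *
        (((cyclotomicCompanion n).map (Int.cast : ℤ → ℚ)) ^ k))) *ᵥ v = 0) :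
    v = 0 := by
  set f := Int.castRingHom ℚ with hf
  set C : Matrix (Fin (Nat.totient n)) (Fin (Nat.totient n)) ℚ :=
    (cyclotomicCompanion n).map (Int.cast : ℤ → ℚ) with hCq
  have hmapC : C = f.mapMatrix (cyclotomicCompanion n) := rfl
  have hCn : C ^ n = 1 := by
    rw [hmapC, ← map_pow, cyclotomicCompanion_pow_eq_one n (by omega)]
    exact map_one _
  have haev : aeval C (Polynomial.cyclotomic n ℚ) = 0 := by
    have h := aeval_map_matrix f (cyclotomicCompanion n) (Polynomial.cyclotomic n ℤ)
    rw [Polynomial.map_cyclotomic,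
      show (cyclotomicCompanion n) = companionMatrix (Nat.totient n) (Polynomial.cyclotomic n ℤ) from rfl,
      companion_aeval (Polynomial.cyclotomic.monic n ℤ) (Polynomial.natDegree_cyclotomic n ℤ)
        (Nat.totient_pos.mpr (by omega))] at h
    exact h
  set P : Matrix (Fin (Nat.totient n)) (Fin (Nat.totient n)) ℚ :=
    ∑ k ∈ Finset.range n, ((C ^ k)ᵀ * (C ^ k)) with hP
  set M : Matrix (Fin (Nat.totient n)) (Fin (Nat.totient n)) ℚ :=
    ∑ k ∈ Finset.range n, ((C ^ k)ᵀ * (Cᵀ - C) * (C ^ k)) with hM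
  -- conjugation invariance of P
  have hconjP : Cᵀ * P * C = P := by
    apply conj_sum_inv n C (fun k => (C ^ k)ᵀ * (C ^ k))
    · intro k
      rw [pow_succ, Matrix.transpose_mul, Matrix.mul_assoc, Matrix.mul_assoc, Matrix.mul_assoc]
    · rw [hCn]; simp
  -- M = Cᵀ P - P C
  have hMeq : M = Cᵀ * P - P * C := by
    rw [hM, hP, Finset.mul_sum, Finset.sum_mul, ← Finset.sum_sub_distrib]
    refine Finset.sum_congr rfl fun k _ => ?_
    have e1 : (C ^ k)ᵀ * Cᵀ = Cᵀ * (C ^ k)ᵀ := by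
      rw [← Matrix.transpose_mul, ← Matrix.transpose_mul, ← pow_succ, ← pow_succ']
    have e2 : C * C ^ k = C ^ k * C := by rw [← pow_succ, ← pow_succ']
    rw [Matrix.mul_sub, Matrix.sub_mul]
    congr 1
    · rw [e1, Matrix.mul_assoc]
    · rw [Matrix.mul_assoc, e2, ← Matrix.mul_assoc]
  -- M C = P (1 - C²)
  have hMC : M * C = P * (1 - C ^ 2) := by
    rw [hMeq, Matrix.sub_mul, Matrix.mul_sub, Matrix.mul_one, hconjP, sq, ← Matrix.mul_assoc]
  -- P is injective
  have hPinj : ∀ u : Fin (Nat.totient n) → ℚ, P *ᵥ u = 0 → u = 0 := by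
    intro u hu
    have hdot : u ⬝ᵥ (P *ᵥ u) = 0 := by rw [hu, dotProduct_zero]
    rw [hP, sum_mulVec', dotProduct_sum'] at hdot
    have hterm : ∀ k, u ⬝ᵥ (((C ^ k)ᵀ * (C ^ k)) *ᵥ u) = (C ^ k *ᵥ u) ⬝ᵥ (C ^ k *ᵥ u) := by
      intro k
      rw [← Matrix.mulVec_mulVec, Matrix.dotProduct_mulVec, Matrix.vecMul_transpose]
    have hnn : ∀ w : Fin (Nat.totient n) → ℚ, 0 ≤ w ⬝ᵥ w :=
      fun w => Finset.sum_nonneg fun i _ => mul_self_nonneg _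
    have hzero : ∀ k ∈ Finset.range n, u ⬝ᵥ (((C ^ k)ᵀ * (C ^ k)) *ᵥ u) = 0 :=
      (Finset.sum_eq_zero_iff_of_nonneg (fun k _ => by rw [hterm k]; exact hnn _)).mp hdot
    have h0 := hzero 0 (Finset.mem_range.mpr (by omega))
    rw [hterm 0, pow_zero, Matrix.one_mulVec, dotProduct_self_eq_zero] at h0
    exact h0
  -- Bezout: (1 - C^2) is injective
  have hirr := Polynomial.cyclotomic.irreducible_rat (show 0 < n by omega)
  have hdeg2 : 2 ≤ (Polynomial.cyclotomic n ℚ).natDegree := by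
    rw [Polynomial.natDegree_cyclotomic]
    have h1 : n.totient ≠ 1 := by
      intro h
      rcases Nat.totient_eq_one_iff.mp h with rfl | rfl <;> omega
    have h0 : 0 < n.totient := Nat.totient_pos.mpr (by omega)
    omega
  have hnotdvd : ¬ (Polynomial.cyclotomic n ℚ) ∣ (1 - X ^ 2 : ℚ[X]) := by
    intro hdvd
    have hfac : (1 - X ^ 2 : ℚ[X]) = (1 - X) * (1 + X) := by ring
    rw [hfac] at hdvd
    have hne1 : (1 - X : ℚ[X]) ≠ 0 := fun h => by
      simpa using congrArg (Polynomial.eval 0) h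
    have hne2 : (1 + X : ℚ[X]) ≠ 0 := fun h => by
      simpa using congrArg (Polynomial.eval 0) h
    rcases hirr.prime.2.2 _ _ hdvd with h | h
    · have := Polynomial.natDegree_le_of_dvd h hne1
      have hle : (1 - X : ℚ[X]).natDegree ≤ 1 := by
        refine le_trans (Polynomial.natDegree_sub_le _ _) ?_
        simp
      omega
    · have := Polynomial.natDegree_le_of_dvd h hne2
      have hle : (1 + X : ℚ[X]).natDegree ≤ 1 := by
        refine le_trans (Polynomial.natDegree_add_le _ _) ?_
        simp
      omega
  obtain ⟨a, b, hab⟩ := hirr.coprime_iff_not_dvd.mpr hnotdvd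
  have hBez : aeval C b * (1 - C ^ 2) = 1 := by
    have h := congrArg (aeval C) hab
    simp only [_root_.map_add, _root_.map_mul, haev, mul_zero, zero_add, map_sub,
      _root_.map_one, map_pow, aeval_X] at h
    exact h
  -- finish
  set w : Fin (Nat.totient n) → ℚ := (C ^ (n - 1)) *ᵥ v with hw
  have hvw : C *ᵥ w = v := by
    rw [hw, Matrix.mulVec_mulVec, ← pow_succ']
    have : n - 1 + 1 = n := by omega
    rw [this, hCn, Matrix.one_mulVec]
  rw [← hvw, Matrix.mulVec_mulVec, hMC, ← Matrix.mulVec_mulVec] at hv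
  have h2 : (1 - C ^ 2) *ᵥ w = 0 := hPinj _ hv
  have hw0 : w = 0 := by
    have h3 : (aeval C b * (1 - C ^ 2)) *ᵥ w = w := by rw [hBez, Matrix.one_mulVec]
    rw [← Matrix.mulVec_mulVec, h2, Matrix.mulVec_zero] at h3
    exact h3.symm
  rw [← hvw, hw0, Matrix.mulVec_zero]

end KeyRat

lemma map_Msum {R : Type*} [CommRing R] {m nn : ℕ} (f : ℤ →+* R) (A : Matrix (Fin m) (Fin m) ℤ) :
    (∑ k ∈ Finset.range nn, ((A ^ k)ᵀ * (Aᵀ - A) * A ^ k)).map f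
      = ∑ k ∈ Finset.range nn, (((A.map f) ^ k)ᵀ * ((A.map f)ᵀ - A.map f) * (A.map f) ^ k) := by
  show f.mapMatrix _ = _
  rw [map_sum]
  refine Finset.sum_congr rfl fun k _ => ?_
  have hp : ∀ j : ℕ, (A.map ⇑f) ^ j = (A ^ j).map ⇑f := fun j => by
    rw [show A.map ⇑f = f.mapMatrix A from rfl, ← map_pow]; rfl
  simp only [hp, ← Matrix.transpose_map]
  show f.mapMatrix _ = f.mapMatrix _ * (f.mapMatrix _ - f.mapMatrix _) * f.mapMatrix _
  rw [← map_sub, ← _root_.map_mul, ← _root_.map_mul]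

end Aux

/-- For `n ≥ 3`, `d = φ(n)` and an irrational `θ`, the matrix
`Θ = θ ∑_{k=0}^{n-1} (C_n^k)ᵗ (C_nᵗ - C_n) C_n^k` is skew-symmetric, satisfies
`C_nᵗ Θ C_n = Θ`, and is nondegenerate: `Θ x ∈ ℤ^d` forces `x = 0`. -/
theorem stmt_12 (n : ℕ) (hn : 3 ≤ n) (θ : ℝ) (hθ : Irrational θ)
    (C : Matrix (Fin (Nat.totient n)) (Fin (Nat.totient n)) ℝ)
    (hC : C = (cyclotomicCompanion n).map (Int.cast : ℤ → ℝ))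
    (Θ : Matrix (Fin (Nat.totient n)) (Fin (Nat.totient n)) ℝ)
    (hΘ : Θ = θ • ∑ k ∈ Finset.range n, ((C ^ k)ᵀ * (Cᵀ - C) * (C ^ k))) :
    Θᵀ = -Θ ∧ Cᵀ * Θ * C = Θ ∧
      ∀ x : Fin (Nat.totient n) → ℤ,
        (∀ i, ∃ m : ℤ, Θ.mulVec (fun j => (x j : ℝ)) i = (m : ℝ)) → x = 0 := by
  have hCn : C ^ n = 1 := by
    rw [hC]
    show ((Int.castRingHom ℝ).mapMatrix (cyclotomicCompanion n)) ^ n = 1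
    rw [← map_pow, cyclotomicCompanion_pow_eq_one n (by omega)]
    exact map_one _
  refine ⟨?_, ?_, ?_⟩
  · -- skew symmetry
    rw [hΘ, Matrix.transpose_smul, ← smul_neg]
    congr 1
    rw [Matrix.transpose_sum, ← Finset.sum_neg_distrib]
    refine Finset.sum_congr rfl fun k _ => ?_
    simp only [Matrix.transpose_mul, Matrix.transpose_sub, Matrix.transpose_transpose]
    noncomm_ring
  · -- conjugation invariance
    rw [hΘ, Matrix.mul_smul, Matrix.smul_mul]
    congr 1
    apply conj_sum_inv n C (fun k => (C ^ k)ᵀ * (Cᵀ - C) * C ^ k)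
    · intro k
      simp only [pow_succ, Matrix.transpose_mul, Matrix.mul_assoc]
    · rw [hCn]; simp
  · -- nondegeneracy
    intro x hx
    set Mz : Matrix (Fin (Nat.totient n)) (Fin (Nat.totient n)) ℤ :=
      ∑ k ∈ Finset.range n, (((cyclotomicCompanion n) ^ k)ᵀ *
        ((cyclotomicCompanion n)ᵀ - cyclotomicCompanion n) * (cyclotomicCompanion n) ^ k) with hMz
    have hmapR : (∑ k ∈ Finset.range n, ((C ^ k)ᵀ * (Cᵀ - C) * (C ^ k)))
        = Mz.map (Int.cast : ℤ → ℝ) := by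
      rw [hC]
      exact (map_Msum (Int.castRingHom ℝ) (cyclotomicCompanion n)).symm
    have hmv : ∀ i, Θ.mulVec (fun j => (x j : ℝ)) i = θ * (((Mz *ᵥ x) i : ℤ) : ℝ) := by
      intro i
      rw [hΘ, hmapR, Matrix.smul_mulVec, Pi.smul_apply, smul_eq_mul]
      congr 1
      exact (RingHom.map_mulVec (Int.castRingHom ℝ) Mz x i).symm
    have hMzx : Mz *ᵥ x = 0 := by
      funext i
      by_contra hne
      obtain ⟨m, hm⟩ := hx i
      rw [hmv i] at hm
      have hc0 : (((Mz *ᵥ x) i : ℤ) : ℝ) ≠ 0 := by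
        simpa using hne
      have hrat : θ = (((m : ℚ) / ((Mz *ᵥ x) i : ℚ) : ℚ) : ℝ) := by
        push_cast
        rw [eq_div_iff hc0]
        exact hm
      exact hθ ⟨_, hrat.symm⟩
    -- pass to ℚ
    have hq : (∑ k ∈ Finset.range n,
        ((((cyclotomicCompanion n).map (Int.cast : ℤ → ℚ)) ^ k)ᵀ *
          (((cyclotomicCompanion n).map (Int.cast : ℤ → ℚ))ᵀ -
            (cyclotomicCompanion n).map (Int.cast : ℤ → ℚ)) *
          (((cyclotomicCompanion n).map (Int.cast : ℤ → ℚ)) ^ k)))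
        *ᵥ (fun j => ((x j : ℤ) : ℚ)) = 0 := by
      have h1 := map_Msum (nn := n) (Int.castRingHom ℚ) (cyclotomicCompanion n)
      simp only [Int.coe_castRingHom] at h1
      funext i
      have h3 := RingHom.map_mulVec (Int.castRingHom ℚ) Mz x i
      simp only [Int.coe_castRingHom, Function.comp_def, hMzx, Pi.zero_apply, map_zero] at h3
      rw [← h1, ← h3]
      rfl
    have hfin := key_rat n hn (fun j => ((x j : ℤ) : ℚ)) hq
    funext i
    have h0 : ((x i : ℤ) : ℚ) = 0 := by simpa using congrFun hfin i
    simp only [Pi.zero_apply]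
    exact_mod_cast h0
end

section
/- Let d ≥ 3, let C ∈ GL_d(ℤ) be the companion matrix of a monic degree-d polynomial, and let Θ = (θ_{ij}) be a real skew-symmetric d × d matrix with C^t Θ C = Θ. Then Θ is constant along diagonals: θ_{ij} depends only on j - i, i.e., there exist θ_0, ..., θ_{d-2} ∈ ℝ with θ_{i,i+k} = θ_{k-1} for all 1 ≤ i < i + k ≤ d. -/
open Matrix

/-- If `d ≥ 3`, `C ∈ GL_d(ℤ)` is the companion matrix of a monic degree-`d`
polynomial and `Θ` is a real skew-symmetric matrix with `Cᵗ Θ C = Θ`, then `Θ`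
is constant along diagonals: there are `θ_0, …, θ_{d-2}` with
`Θ_{i, i+k} = θ_{k-1}`. -/
theorem stmt_13 (d : ℕ) (hd : 3 ≤ d) (p : Polynomial ℤ) (hm : p.Monic)
    (hdeg : p.natDegree = d) (hunit : IsUnit (companionMatrix d p).det)
    (C : Matrix (Fin d) (Fin d) ℝ)
    (hC : C = (companionMatrix d p).map (Int.cast : ℤ → ℝ))
    (Θ : Matrix (Fin d) (Fin d) ℝ) (hskew : Θᵀ = -Θ)
    (hinv : Cᵀ * Θ * C = Θ) :
    ∃ θf : ℕ → ℝ, ∀ i j : Fin d, (i : ℕ) < (j : ℕ) →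
      Θ i j = θf ((j : ℕ) - (i : ℕ) - 1) := by
  have hCcol : ∀ (l j : Fin d), (j : ℕ) + 1 < d →
      C l j = if (l : ℕ) = (j : ℕ) + 1 then 1 else 0 := by
    intro l j hj
    have : (j : ℕ) ≠ d - 1 := by omega
    simp [hC, companionMatrix, this]
  have hshift : ∀ (i j : Fin d) (hi : (i : ℕ) + 1 < d) (hj : (j : ℕ) + 1 < d),
      Θ ⟨(i : ℕ) + 1, hi⟩ ⟨(j : ℕ) + 1, hj⟩ = Θ i j := by
    intro i j hi hj
    have h := congrFun (congrFun hinv i) j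
    rw [← h]
    rw [Matrix.mul_apply]
    rw [Finset.sum_eq_single (⟨(j : ℕ) + 1, hj⟩ : Fin d)]
    · rw [hCcol _ j hj]
      simp only [Fin.ext_iff]
      rw [if_pos trivial, mul_one]
      rw [Matrix.mul_apply]
      rw [Finset.sum_eq_single (⟨(i : ℕ) + 1, hi⟩ : Fin d)]
      · rw [Matrix.transpose_apply, hCcol _ i hi]
        simp
      · intro k _ hk
        rw [Matrix.transpose_apply, hCcol _ i hi]
        rw [if_neg, zero_mul]
        intro hk'
        exact hk (Fin.ext hk')
      · intro h; exact absurd (Finset.mem_univ _) h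
    · intro l _ hl
      rw [hCcol _ j hj, if_neg, mul_zero]
      intro hl'
      exact hl (Fin.ext hl')
    · intro h; exact absurd (Finset.mem_univ _) h
  -- reduce to row 0
  have key : ∀ n (i j : Fin d), (i : ℕ) = n → (i : ℕ) < (j : ℕ) →
      Θ i j = Θ ⟨0, by omega⟩ ⟨(j : ℕ) - (i : ℕ), by omega⟩ := by
    intro n
    induction n with
    | zero =>
      intro i j hi hij
      congr 1 <;> apply Fin.ext <;> simp [hi]
    | succ m ih =>
      intro i j hi hij
      have hjpos : 0 < (j : ℕ) := by omega
      have hi' : m + 1 < d := hi ▸ i.isLt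
      have hj' : (j : ℕ) - 1 + 1 < d := by omega
      have := hshift ⟨m, by omega⟩ ⟨(j : ℕ) - 1, by omega⟩ (by simpa using hi') (by simpa using hj')
      have e1 : (⟨m + 1, by simpa using hi'⟩ : Fin d) = i := by apply Fin.ext; simp [hi]
      have e2 : (⟨(j : ℕ) - 1 + 1, by simpa using hj'⟩ : Fin d) = j := by
        apply Fin.ext; simp; omega
      rw [e1, e2] at this
      rw [this]
      rw [ih ⟨m, by omega⟩ ⟨(j : ℕ) - 1, by omega⟩ rfl (by simp; omega)]
      congr 1
      apply Fin.ext
      simp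
      omega
  refine ⟨fun n => if h : n + 1 < d then Θ ⟨0, by omega⟩ ⟨n + 1, h⟩ else 0, ?_⟩
  intro i j hij
  have hlt : (j : ℕ) - (i : ℕ) - 1 + 1 < d := by
    have := j.isLt; omega
  rw [key (i : ℕ) i j rfl hij]
  simp only [dif_pos hlt]
  congr 1
  apply Fin.ext
  simp
  omega
end

section
/- Every real skew-symmetric 3 × 3 matrix with a zero row (equivalently, a zero column) is degenerate: if the i-th row of Θ is zero, then Θ e_i = 0 ∈ ℤ^3, so the nonzero integer vector e_i witnesses degeneracy. Consequently, for each matrix A of finite order in GL_3(ℤ) other than -I_3 from Tahara's list (e.g., A = diag(-1,1,1), or the order-3 matrix with rows (1,0,0),(0,0,-1),(0,1,-1)), every Θ with A^t Θ A = Θ is degenerate. -/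
open Matrix

lemma aux_zero_row (Θ : Matrix (Fin 3) (Fin 3) ℝ) (hskew : Θᵀ = -Θ)
    (i : Fin 3) (hrow : ∀ j, Θ i j = 0) :
    Θ.mulVec (Pi.single i 1) = 0 ∧
    ∃ x : Fin 3 → ℤ, x ≠ 0 ∧
      ∀ k, ∃ m : ℤ, Θ.mulVec (fun j => (x j : ℝ)) k = (m : ℝ) := by
  have hcol : ∀ k, Θ k i = 0 := by
    intro k
    have := congrFun (congrFun hskew i) k
    simp only [transpose_apply, Matrix.neg_apply] at this
    rw [this, hrow k, neg_zero]
  have hmv : Θ.mulVec (Pi.single i 1) = 0 := by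
    funext k
    simp only [mulVec, dotProduct, Pi.single_apply, Fin.sum_univ_three, Pi.zero_apply]
    by_cases h0 : i = 0 <;> by_cases h1 : i = 1 <;> by_cases h2 : i = 2 <;>
      simp_all [hcol] <;> omega
  refine ⟨hmv, Pi.single i 1, ?_, ?_⟩
  · intro h
    have := congrFun h i
    simp at this
  · intro k
    refine ⟨0, ?_⟩
    have : (fun j => ((Pi.single i 1 : Fin 3 → ℤ) j : ℝ)) = Pi.single i 1 := by
      funext j
      by_cases hj : j = i <;> simp [Pi.single_apply, hj]
    rw [this, hmv]
    simp

/-- (a) Every real skew-symmetric `3 × 3` matrix with a zero row is degenerate: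
`Θ eᵢ = 0`, so `eᵢ` witnesses degeneracy.  (b) Consequently, for
`A = diag(-1, 1, 1)`, every skew-symmetric `Θ` with `Aᵗ Θ A = Θ` satisfies
`θ₁₂ = θ₁₃ = 0`, hence `Θ e₁ = 0` and `Θ` is degenerate. -/
theorem stmt_17 :
    (∀ Θ : Matrix (Fin 3) (Fin 3) ℝ, Θᵀ = -Θ →
      ∀ i : Fin 3, (∀ j, Θ i j = 0) →
        Θ.mulVec (Pi.single i 1) = 0 ∧
        ∃ x : Fin 3 → ℤ, x ≠ 0 ∧
          ∀ k, ∃ m : ℤ, Θ.mulVec (fun j => (x j : ℝ)) k = (m : ℝ)) ∧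
    (∀ Θ : Matrix (Fin 3) (Fin 3) ℝ, Θᵀ = -Θ →
      (!![(-1:ℝ),0,0; 0,1,0; 0,0,1])ᵀ * Θ * !![(-1:ℝ),0,0; 0,1,0; 0,0,1] = Θ →
        Θ 0 1 = 0 ∧ Θ 0 2 = 0 ∧ Θ.mulVec (Pi.single 0 1) = 0 ∧
        ∃ x : Fin 3 → ℤ, x ≠ 0 ∧
          ∀ k, ∃ m : ℤ, Θ.mulVec (fun j => (x j : ℝ)) k = (m : ℝ)) := by
  constructor
  · exact aux_zero_row
  · intro Θ hskew heq
    have h01 : Θ 0 1 = 0 := by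
      have := congrFun (congrFun heq 0) 1
      simp [Matrix.mul_apply, Fin.sum_univ_three, Matrix.vecHead, Matrix.vecTail] at this
      linarith
    have h02 : Θ 0 2 = 0 := by
      have := congrFun (congrFun heq 0) 2
      simp [Matrix.mul_apply, Fin.sum_univ_three, Matrix.vecHead, Matrix.vecTail] at this
      linarith
    have h00 : Θ 0 0 = 0 := by
      have := congrFun (congrFun hskew 0) 0
      simp only [transpose_apply, Matrix.neg_apply] at this
      linarith
    have hrow : ∀ j, Θ 0 j = 0 := by
      intro j
      fin_cases j <;> assumption
    obtain ⟨hmv, hx⟩ := aux_zero_row Θ hskew 0 hrow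
    exact ⟨h01, h02, hmv, hx⟩
end
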